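/- Under the linear herding model with w̃_ℓ < 1 for all ℓ ≥ 2 (so ϕ_j > 0 for all j), fix m ∈ 𝓜 and let β̂_{i,m} = (β_{i,m} − α_m)/ϕ_{i−1}. Then for every i ≥ 1 the martingale increment satisfies, almost surely, β̂_{i+1,m} − β̂_{i,m} = (w̃_{i+1}/ϕ_i)·[ 1{R_{i+1} = m} − β_{i,m} + (1 − γ_i + η_i γ_i)(β_{i,m} − α_m) ]; in particular there exist 𝓗_i-measurable random variables a_{i+1} ≤ b_{i+1} with b_{i+1} − a_{i+1} = w̃_{i+1}/ϕ_i such that a_{i+1} ≤ β̂_{i+1,m} − β̂_{i,m} ≤ b_{i+1} almost surely. -/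

import Mathlib

open MeasureTheory Filter

/-- Cumulative weight `∑_{j=1}^i w_j`. -/
noncomputable def Sw (w : ℕ → ℝ) (i : ℕ) : ℝ := ∑ j ∈ Finset.Icc 1 i, w j

/-- Normalized weight `w̃_i = w_i / ∑_{j=1}^i w_j`. -/
noncomputable def wnorm (w : ℕ → ℝ) (i : ℕ) : ℝ := w i / Sw w i

/-- Historical collective opinion
`β_{i,m} = (∑_{j=1}^i w_j 1{R_j = m}) / (∑_{j=1}^i w_j)`. -/
noncomputable def betaH {Ω : Type*} (w : ℕ → ℝ) (R : ℕ → Ω → ℕ) (i m : ℕ) (ω : Ω) : ℝ :=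
  (∑ j ∈ Finset.Icc 1 i, w j * (if R j ω = m then (1 : ℝ) else 0)) / Sw w i

/-- `𝓗_i`: the σ-algebra generated by `R_1, …, R_i` (trivial for `i = 0`). -/
def Hsig {Ω : Type*} (R : ℕ → Ω → ℕ) (i : ℕ) : MeasurableSpace Ω :=
  ⨆ j ∈ Finset.Icc 1 i, MeasurableSpace.comap (R j) ⊤

/-- `ϕ_j = ∏_{ℓ=1}^j [1 − w̃_{ℓ+1} (1 − γ_ℓ + η_ℓ γ_ℓ)]` (with `ϕ_0 = 1`). -/
noncomputable def varphi (wt γ η : ℕ → ℝ) (j : ℕ) : ℝ :=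
  ∏ ℓ ∈ Finset.Icc 1 j, (1 - wt (ℓ + 1) * (1 - γ ℓ + η ℓ * γ ℓ))

/-- Rescaled error `β̂_{i,m} = (β_{i,m} − α_m)/ϕ_{i−1}`. -/
noncomputable def betaHat {Ω : Type*} (w γ η : ℕ → ℝ) (R : ℕ → Ω → ℕ) (α : ℕ → ℝ)
    (i m : ℕ) (ω : Ω) : ℝ :=
  (betaH w R i m ω - α m) / varphi (wnorm w) γ η (i - 1)

lemma Sw_pos (w : ℕ → ℝ) (hw : ∀ j, 0 ≤ w j) (hw1 : 0 < w 1) (i : ℕ) (hi : 1 ≤ i) :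
    0 < Sw w i := by
  have h : w 1 ≤ Sw w i :=
    Finset.single_le_sum (fun j _ => hw j) (Finset.mem_Icc.2 ⟨le_refl 1, hi⟩)
  linarith

lemma Sw_succ (w : ℕ → ℝ) (i : ℕ) : Sw w (i + 1) = Sw w i + w (i + 1) := by
  unfold Sw
  exact Finset.sum_Icc_succ_top (Nat.le_add_left 1 i) _

lemma varphi_succ (wt γ η : ℕ → ℝ) (k : ℕ) :
    varphi wt γ η (k + 1)
      = varphi wt γ η k * (1 - wt (k + 2) * (1 - γ (k+1) + η (k+1) * γ (k+1))) := by
  unfold varphi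
  exact Finset.prod_Icc_succ_top (Nat.le_add_left 1 k) _

lemma fac_pos (w γ η : ℕ → ℝ) (hw : ∀ j, 0 ≤ w j) (hw1 : 0 < w 1)
    (hwlt : ∀ ℓ : ℕ, 2 ≤ ℓ → wnorm w ℓ < 1)
    (hγ : ∀ i, γ i ∈ Set.Icc (0 : ℝ) 1) (hη : ∀ i, η i ∈ Set.Icc (0 : ℝ) 1)
    (ℓ : ℕ) (hℓ : 1 ≤ ℓ) :
    0 < 1 - wnorm w (ℓ + 1) * (1 - γ ℓ + η ℓ * γ ℓ) := by
  have hS : 0 < Sw w (ℓ + 1) := Sw_pos w hw hw1 _ (by omega)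
  have h0 : 0 ≤ wnorm w (ℓ + 1) := div_nonneg (hw _) hS.le
  have h1 : wnorm w (ℓ + 1) < 1 := hwlt _ (by omega)
  obtain ⟨hγ0, hγ1⟩ := hγ ℓ
  obtain ⟨hη0, hη1⟩ := hη ℓ
  have hc0 : 0 ≤ 1 - γ ℓ + η ℓ * γ ℓ := by nlinarith
  have hc1 : 1 - γ ℓ + η ℓ * γ ℓ ≤ 1 := by nlinarith
  nlinarith

lemma varphi_pos (w γ η : ℕ → ℝ) (hw : ∀ j, 0 ≤ w j) (hw1 : 0 < w 1)
    (hwlt : ∀ ℓ : ℕ, 2 ≤ ℓ → wnorm w ℓ < 1)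
    (hγ : ∀ i, γ i ∈ Set.Icc (0 : ℝ) 1) (hη : ∀ i, η i ∈ Set.Icc (0 : ℝ) 1)
    (j : ℕ) : 0 < varphi (wnorm w) γ η j := by
  unfold varphi
  exact Finset.prod_pos fun ℓ hℓ =>
    fac_pos w γ η hw hw1 hwlt hγ hη ℓ (Finset.mem_Icc.1 hℓ).1

lemma ind_meas {Ω : Type*} (R : ℕ → Ω → ℕ) (i j m : ℕ) (hj : j ∈ Finset.Icc 1 i) :
    Measurable[Hsig R i] (fun ω => if R j ω = m then (1 : ℝ) else 0) := by
  have hle : MeasurableSpace.comap (R j) ⊤ ≤ Hsig R i := by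
    exact le_iSup₂ (f := fun j _ => MeasurableSpace.comap (R j) (⊤ : MeasurableSpace ℕ)) j hj
  have hs : MeasurableSet[Hsig R i] {ω | R j ω = m} :=
    hle _ ⟨{m}, trivial, rfl⟩
  exact Measurable.ite hs measurable_const measurable_const

lemma betaH_meas {Ω : Type*} (w : ℕ → ℝ) (R : ℕ → Ω → ℕ) (i m : ℕ) :
    Measurable[Hsig R i] (betaH w R i m) := by
  unfold betaH
  apply Measurable.div_const
  exact Finset.measurable_sum _ fun j hj => (ind_meas R i j m hj).const_mul _

lemma alg (S W I A φ g e β : ℝ) (hS : 0 < S) (hW : 0 ≤ W)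
    (hfac : 0 < 1 - (W / (S + W)) * (1 - g + e * g)) (hφ : 0 < φ) :
    ((β * S + W * I) / (S + W) - A) / (φ * (1 - (W / (S + W)) * (1 - g + e * g)))
        - (β - A) / φ
      = ((W / (S + W)) / (φ * (1 - (W / (S + W)) * (1 - g + e * g))))
          * (I - β + (1 - g + e * g) * (β - A)) := by
  have hSW : (0 : ℝ) < S + W := by linarith
  have h4 : W * (1 - g + e * g) < S + W := by
    have h5 : (W / (S + W)) * (1 - g + e * g) < 1 := by linarith
    have h6 : W * (1 - g + e * g) / (S + W) < 1 := by
      rw [div_mul_eq_mul_div] at h5; exact h5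
    exact (div_lt_one hSW).mp h6
  have h7 : W * (1 - g + e * g) = W - W * g + W * g * e := by ring
  have h3 : 0 < S + W * g - W * g * e := by linarith
  have hD0 : 0 < S * φ + (W * φ * g - W * φ * g * e) := by nlinarith [mul_pos hφ h3]
  field_simp [hD0.ne', h3.ne']
  linear_combination (β - A) * mul_inv_cancel₀ h3.ne'

lemma key_identity {Ω : Type*} (w γ η : ℕ → ℝ) (hw : ∀ j, 0 ≤ w j) (hw1 : 0 < w 1)
    (hwlt : ∀ ℓ : ℕ, 2 ≤ ℓ → wnorm w ℓ < 1)
    (hγ : ∀ i, γ i ∈ Set.Icc (0 : ℝ) 1) (hη : ∀ i, η i ∈ Set.Icc (0 : ℝ) 1)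
    (R : ℕ → Ω → ℕ) (α : ℕ → ℝ) (m k : ℕ) (ω : Ω) :
    betaHat w γ η R α (k + 2) m ω - betaHat w γ η R α (k + 1) m ω
      = (wnorm w (k + 2) / varphi (wnorm w) γ η (k + 1)) *
          ((if R (k + 2) ω = m then (1 : ℝ) else 0) - betaH w R (k + 1) m ω
            + (1 - γ (k + 1) + η (k + 1) * γ (k + 1)) * (betaH w R (k + 1) m ω - α m)) := by
  have hS : 0 < Sw w (k + 1) := Sw_pos w hw hw1 _ (by omega)
  have hS' : Sw w (k + 2) = Sw w (k + 1) + w (k + 2) := Sw_succ w (k + 1)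
  have hS'pos : 0 < Sw w (k + 2) := by rw [hS']; have := hw (k + 2); linarith
  have hφpos : 0 < varphi (wnorm w) γ η k := varphi_pos w γ η hw hw1 hwlt hγ hη k
  have hfac : 0 < 1 - wnorm w (k + 2) * (1 - γ (k + 1) + η (k + 1) * γ (k + 1)) :=
    fac_pos w γ η hw hw1 hwlt hγ hη (k + 1) (by omega)
  have hβ' : betaH w R (k + 2) m ω
      = (betaH w R (k + 1) m ω * Sw w (k + 1)
          + w (k + 2) * (if R (k + 2) ω = m then (1 : ℝ) else 0)) / Sw w (k + 2) := by
    unfold betaH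
    rw [div_mul_cancel₀ _ (ne_of_gt hS)]
    congr 1
    exact Finset.sum_Icc_succ_top (Nat.le_add_left 1 (k + 1)) _
  have hφ' : varphi (wnorm w) γ η (k + 1)
      = varphi (wnorm w) γ η k
          * (1 - wnorm w (k + 2) * (1 - γ (k + 1) + η (k + 1) * γ (k + 1))) :=
    varphi_succ (wnorm w) γ η k
  have hfac' : 0 < 1 - (w (k + 2) / (Sw w (k + 1) + w (k + 2)))
      * (1 - γ (k + 1) + η (k + 1) * γ (k + 1)) := by
    have h := hfac
    unfold wnorm at h
    rw [hS'] at h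
    exact h
  show (betaH w R (k + 2) m ω - α m) / varphi (wnorm w) γ η (k + 2 - 1)
      - (betaH w R (k + 1) m ω - α m) / varphi (wnorm w) γ η (k + 1 - 1) = _
  have h1 : k + 2 - 1 = k + 1 := rfl
  have h2 : k + 1 - 1 = k := rfl
  rw [h1, h2, hβ', hφ']
  have e1 : wnorm w (k + 2) = w (k + 2) / Sw w (k + 2) := rfl
  rw [e1, hS']
  exact alg (Sw w (k + 1)) (w (k + 2)) _ (α m) _ (γ (k + 1)) (η (k + 1)) _ hS (hw _)
    hfac' hφpos

/-- under the linear herding model with `w̃_ℓ < 1` for `ℓ ≥ 2`,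
the martingale increment satisfies, almost surely,
`β̂_{i+1,m} − β̂_{i,m} = (w̃_{i+1}/ϕ_i)[1{R_{i+1}=m} − β_{i,m} + (1 − γ_i + η_i γ_i)(β_{i,m} − α_m)]`;
in particular there are `𝓗_i`-measurable `a ≤ b` with `b − a = w̃_{i+1}/ϕ_i`
bounding the increment almost surely. -/
theorem stmt_15
    {Ω : Type*} [MeasurableSpace Ω] (μ : Measure Ω) [IsProbabilityMeasure μ]
    (M : ℕ) (hM : 1 ≤ M)
    (α : ℕ → ℝ) (hα : ∀ m ∈ Finset.Icc 1 M, α m ∈ Set.Icc (0 : ℝ) 1)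
    (hα1 : ∑ m ∈ Finset.Icc 1 M, α m = 1)
    (R : ℕ → Ω → ℕ) (hRrange : ∀ i, 1 ≤ i → ∀ ω, R i ω ∈ Finset.Icc 1 M)
    (hRmeas : ∀ i, Measurable (R i))
    (w : ℕ → ℝ) (hw : ∀ j, 0 ≤ w j) (hw1 : 0 < w 1)
    (hwlt : ∀ ℓ : ℕ, 2 ≤ ℓ → wnorm w ℓ < 1)
    (γ : ℕ → ℝ) (hγ : ∀ i, γ i ∈ Set.Icc (0 : ℝ) 1)
    (η : ℕ → ℝ) (hη : ∀ i, η i ∈ Set.Icc (0 : ℝ) 1)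
    -- linear herding model
    (hmodel : ∀ i : ℕ, 1 ≤ i → ∀ m ∈ Finset.Icc 1 M,
      μ[(fun ω => if R (i + 1) ω = m then (1 : ℝ) else 0) | Hsig R i]
        =ᵐ[μ] fun ω =>
          γ i * ((1 - η i) * betaH w R i m ω + η i * α m) + (1 - γ i) * α m)
    (m : ℕ) (hm : m ∈ Finset.Icc 1 M) (i : ℕ) (hi : 1 ≤ i) :
    (∀ᵐ ω ∂μ,
      betaHat w γ η R α (i + 1) m ω - betaHat w γ η R α i m ω
        = (wnorm w (i + 1) / varphi (wnorm w) γ η i) *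
            ((if R (i + 1) ω = m then (1 : ℝ) else 0) - betaH w R i m ω
              + (1 - γ i + η i * γ i) * (betaH w R i m ω - α m))) ∧
    ∃ a b : Ω → ℝ, Measurable[Hsig R i] a ∧ Measurable[Hsig R i] b ∧
      (∀ ω, b ω - a ω = wnorm w (i + 1) / varphi (wnorm w) γ η i) ∧
      (∀ᵐ ω ∂μ,
        a ω ≤ betaHat w γ η R α (i + 1) m ω - betaHat w γ η R α i m ω ∧
        betaHat w γ η R α (i + 1) m ω - betaHat w γ η R α i m ω ≤ b ω) := by
  obtain ⟨k, rfl⟩ : ∃ k, i = k + 1 := ⟨i - 1, (Nat.succ_pred_eq_of_pos hi).symm⟩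
  have hSpos : 0 < Sw w (k + 1 + 1) := Sw_pos w hw hw1 _ (by omega)
  have hφpos : 0 < varphi (wnorm w) γ η (k + 1) := varphi_pos w γ η hw hw1 hwlt hγ hη _
  have hq0 : 0 ≤ wnorm w (k + 1 + 1) / varphi (wnorm w) γ η (k + 1) :=
    div_nonneg (div_nonneg (hw _) hSpos.le) hφpos.le
  have hid : ∀ ω, betaHat w γ η R α (k + 1 + 1) m ω - betaHat w γ η R α (k + 1) m ω
      = (wnorm w (k + 1 + 1) / varphi (wnorm w) γ η (k + 1)) *
          ((if R (k + 1 + 1) ω = m then (1 : ℝ) else 0) - betaH w R (k + 1) m ω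
            + (1 - γ (k + 1) + η (k + 1) * γ (k + 1)) * (betaH w R (k + 1) m ω - α m)) :=
    fun ω => key_identity w γ η hw hw1 hwlt hγ hη R α m k ω
  refine ⟨Filter.Eventually.of_forall fun ω => hid ω, ?_⟩
  refine ⟨fun ω => (wnorm w (k + 1 + 1) / varphi (wnorm w) γ η (k + 1)) *
      ((1 - γ (k + 1) + η (k + 1) * γ (k + 1)) * (betaH w R (k + 1) m ω - α m)
        - betaH w R (k + 1) m ω),
    fun ω => (wnorm w (k + 1 + 1) / varphi (wnorm w) γ η (k + 1)) *
      ((1 - γ (k + 1) + η (k + 1) * γ (k + 1)) * (betaH w R (k + 1) m ω - α m)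
        - betaH w R (k + 1) m ω) + wnorm w (k + 1 + 1) / varphi (wnorm w) γ η (k + 1),
    ?_, ?_, fun ω => by ring, Filter.Eventually.of_forall fun ω => ?_⟩
  · exact Measurable.const_mul
      ((((betaH_meas w R (k + 1) m).sub measurable_const).const_mul _).sub
        (betaH_meas w R (k + 1) m)) _
  · exact (Measurable.const_mul
      ((((betaH_meas w R (k + 1) m).sub measurable_const).const_mul _).sub
        (betaH_meas w R (k + 1) m)) _).add_const _
  · rw [hid ω]
    have e : ∀ I : ℝ, (wnorm w (k + 1 + 1) / varphi (wnorm w) γ η (k + 1)) *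
        (I - betaH w R (k + 1) m ω
          + (1 - γ (k + 1) + η (k + 1) * γ (k + 1)) * (betaH w R (k + 1) m ω - α m))
        = (wnorm w (k + 1 + 1) / varphi (wnorm w) γ η (k + 1)) *
            ((1 - γ (k + 1) + η (k + 1) * γ (k + 1)) * (betaH w R (k + 1) m ω - α m)
              - betaH w R (k + 1) m ω)
          + (wnorm w (k + 1 + 1) / varphi (wnorm w) γ η (k + 1)) * I := fun I => by ring
    rw [e]
    by_cases h : R (k + 1 + 1) ω = m
    · simp only [h, if_pos]
      constructor <;> nlinarith [hq0]
    · simp only [h, if_neg, not_false_iff]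
      constructor <;> nlinarith [hq0]
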